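/- Let X be a normal space written as a topological sum X = ⊕_{n<ω} X_n. For each n, let G_n be an (n+1)-linked collection of closed subsets of X_n which is far in X_n (every closed discrete subset of X_n is disjoint from some member of G_n). Then the collection G = { ⋃_n G_n : G_n ∈ G_n for each n } of closed subsets of X has the finite intersection property and is far in X, and hence any point of ⋂{ cl_{βX}(G) : G ∈ G } is a far point of X. -/
import Mathlib


open Set Topology

/-- A subset `D` is discrete if each of its points has an open neighborhood
meeting `D` only in that point. -/
def IsDiscreteSubset {X : Type*} [TopologicalSpace X] (D : Set X) : Prop :=
  ∀ x ∈ D, ∃ U : Set X, IsOpen U ∧ x ∈ U ∧ U ∩ D = {x}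

/-- A space is countably tight if every point in the closure of a set is in the
closure of a countable subset of it. -/
def CountablyTight (X : Type*) [TopologicalSpace X] : Prop :=
  ∀ (A : Set X) (x : X), x ∈ closure A → ∃ C ⊆ A, C.Countable ∧ x ∈ closure C

/-- In a normal space, disjoint closed sets have disjoint closures in the Stone–Čech
compactification. -/
lemma sep_closure {X : Type*} [TopologicalSpace X] [NormalSpace X]
    {C D : Set X} (hC : IsClosed C) (hD : IsClosed D) (hCD : Disjoint C D)
    {p : StoneCech X} (hp : p ∈ closure (stoneCechUnit '' C)) :
    p ∉ closure (stoneCechUnit '' D) := by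
  obtain ⟨f, hf0, hf1, hfI⟩ := exists_continuous_zero_one_of_isClosed hC hD hCD
  set g : X → Icc (0:ℝ) 1 := fun x => ⟨f x, hfI x⟩ with hgdef
  have hgc : Continuous g := Continuous.subtype_mk f.continuous _
  set F := stoneCechExtend hgc with hF
  have hFc : Continuous F := continuous_stoneCechExtend hgc
  have key : ∀ (S : Set X) (c : Icc (0:ℝ) 1), (∀ x ∈ S, g x = c) →
      ∀ q ∈ closure (stoneCechUnit '' S), F q = c := by
    intro S c hc q hq
    have h1 : F q ∈ closure (F '' (stoneCechUnit '' S)) :=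
      (image_closure_subset_closure_image hFc) ⟨q, hq, rfl⟩
    have himg : F '' (stoneCechUnit '' S) ⊆ {c} := by
      rintro _ ⟨_, ⟨x, hx, rfl⟩, rfl⟩
      have hx' : F (stoneCechUnit x) = g x := congrFun (stoneCechExtend_extends hgc) x
      simp [hx', hc x hx]
    have h2 := closure_mono himg h1
    simpa using h2
  intro hpD
  have h0 : F p = ⟨0, by norm_num⟩ :=
    key C _ (fun x hx => Subtype.ext (by simp [g, hf0 hx])) p hp
  have h1 : F p = ⟨1, by norm_num⟩ :=
    key D _ (fun x hx => Subtype.ext (by simp [g, hf1 hx])) p hpD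
  rw [h0] at h1
  exact absurd (congrArg Subtype.val h1) (by norm_num)

/-- Combination scheme for far collections on a topological sum `X = ⊕_n X_n` of a
normal (T₄) space: if each `G n` is an (n+1)-linked far collection of closed subsets of
`X n`, then the collection of unions `⋃_n g n` (with `g n ∈ G n`) consists of closed
sets, has the finite intersection property, is far in `X`, and any point of `βX` in the
closure of all its members is a far point of `X`. -/
theorem statement15 {Z : ℕ → Type} [∀ n, TopologicalSpace (Z n)]
    [NormalSpace (Σ n, Z n)] [T1Space (Σ n, Z n)]
    (G : ∀ n : ℕ, Set (Set (Z n)))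
    (hclosed : ∀ n, ∀ g ∈ G n, IsClosed g)
    (hlinked : ∀ n (S : Finset (Set (Z n))), ↑S ⊆ G n → S.Nonempty → S.card ≤ n + 1 →
      (⋂₀ (S : Set (Set (Z n)))).Nonempty)
    (hfar : ∀ n (D : Set (Z n)), IsClosed D → IsDiscreteSubset D →
      ∃ g ∈ G n, D ∩ g = ∅) :
    (∀ A ∈ {A : Set (Σ n, Z n) | ∃ g : ∀ n, Set (Z n),
        (∀ n, g n ∈ G n) ∧ A = ⋃ n, Sigma.mk n '' g n}, IsClosed A) ∧
    (∀ S : Finset (Set (Σ n, Z n)),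
      ↑S ⊆ {A : Set (Σ n, Z n) | ∃ g : ∀ n, Set (Z n),
        (∀ n, g n ∈ G n) ∧ A = ⋃ n, Sigma.mk n '' g n} →
      S.Nonempty → (⋂₀ (S : Set (Set (Σ n, Z n)))).Nonempty) ∧
    (∀ D : Set (Σ n, Z n), IsClosed D → IsDiscreteSubset D →
      ∃ A ∈ {A : Set (Σ n, Z n) | ∃ g : ∀ n, Set (Z n),
        (∀ n, g n ∈ G n) ∧ A = ⋃ n, Sigma.mk n '' g n}, D ∩ A = ∅) ∧
    (∀ p : StoneCech (Σ n, Z n),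
      (∀ A ∈ {A : Set (Σ n, Z n) | ∃ g : ∀ n, Set (Z n),
        (∀ n, g n ∈ G n) ∧ A = ⋃ n, Sigma.mk n '' g n},
          p ∈ closure (stoneCechUnit '' A)) →
      p ∉ Set.range (stoneCechUnit : (Σ n, Z n) → StoneCech (Σ n, Z n)) ∧
        ∀ D : Set (Σ n, Z n), IsClosed D → IsDiscreteSubset D →
          p ∉ closure (stoneCechUnit '' D)) := by
  -- Part 1: closedness
  have closedPart : ∀ A ∈ {A : Set (Σ n, Z n) | ∃ g : ∀ n, Set (Z n),
      (∀ n, g n ∈ G n) ∧ A = ⋃ n, Sigma.mk n '' g n}, IsClosed A := by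
    rintro A ⟨g, hg, rfl⟩
    rw [isClosed_sigma_iff]
    intro i
    have hpre : Sigma.mk i ⁻¹' (⋃ n, Sigma.mk n '' g n) = g i := by
      ext x
      simp only [mem_preimage, mem_iUnion, mem_image]
      constructor
      · rintro ⟨n, y, hy, h⟩
        obtain ⟨rfl, h2⟩ := Sigma.mk.inj_iff.mp h
        exact (eq_of_heq h2) ▸ hy
      · intro hx; exact ⟨i, x, hx, rfl⟩
    rw [hpre]
    exact hclosed i _ (hg i)
  -- Part 3: farness
  have farPart : ∀ D : Set (Σ n, Z n), IsClosed D → IsDiscreteSubset D →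
      ∃ A ∈ {A : Set (Σ n, Z n) | ∃ g : ∀ n, Set (Z n),
        (∀ n, g n ∈ G n) ∧ A = ⋃ n, Sigma.mk n '' g n}, D ∩ A = ∅ := by
    intro D hDc hDd
    have hex : ∀ n, ∃ g ∈ G n, (Sigma.mk n ⁻¹' D) ∩ g = ∅ := by
      intro n
      apply hfar n _ (hDc.preimage continuous_sigmaMk)
      intro x hx
      obtain ⟨U, hU, hxU, hUD⟩ := hDd ⟨n, x⟩ hx
      refine ⟨Sigma.mk n ⁻¹' U, hU.preimage continuous_sigmaMk, hxU, ?_⟩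
      ext y
      simp only [mem_inter_iff, mem_preimage, mem_singleton_iff]
      constructor
      · rintro ⟨h1, h2⟩
        have hmem : (⟨n, y⟩ : Σ n, Z n) ∈ U ∩ D := ⟨h1, h2⟩
        rw [hUD, mem_singleton_iff] at hmem
        exact eq_of_heq (Sigma.mk.inj_iff.mp hmem).2
      · rintro rfl; exact ⟨hxU, hx⟩
    choose g hg hdis using hex
    refine ⟨⋃ n, Sigma.mk n '' g n, ⟨g, hg, rfl⟩, ?_⟩
    rw [eq_empty_iff_forall_notMem]
    intro z hz
    obtain ⟨m, y⟩ := z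
    obtain ⟨hzD, hzA⟩ := hz
    simp only [mem_iUnion, mem_image] at hzA
    obtain ⟨k, w, hw, heq⟩ := hzA
    obtain ⟨hk, h⟩ := Sigma.mk.inj_iff.mp heq
    have hw' : y ∈ g m := by subst hk; exact (eq_of_heq h) ▸ hw
    have hy : y ∈ (Sigma.mk m ⁻¹' D) ∩ g m := ⟨hzD, hw'⟩
    rw [hdis m] at hy
    exact hy
  -- Part 2: finite intersection property
  have fipPart : ∀ S : Finset (Set (Σ n, Z n)),
      ↑S ⊆ {A : Set (Σ n, Z n) | ∃ g : ∀ n, Set (Z n),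
        (∀ n, g n ∈ G n) ∧ A = ⋃ n, Sigma.mk n '' g n} →
      S.Nonempty → (⋂₀ (S : Set (Set (Σ n, Z n)))).Nonempty := by
    intro S hS hne
    classical
    have hch : ∀ A ∈ S, ∃ g : ∀ n, Set (Z n),
        (∀ n, g n ∈ G n) ∧ A = ⋃ n, Sigma.mk n '' g n := fun A hA => hS hA
    choose g hg hA using hch
    set n := S.card - 1 with hn
    have hcard : S.card ≤ n + 1 := by
      have := hne.card_pos; omega
    set T : Finset (Set (Z n)) := S.attach.image (fun A => g A.1 A.2 n) with hT
    have hTsub : ↑T ⊆ G n := by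
      intro t ht
      simp only [hT, Finset.coe_image, mem_image] at ht
      obtain ⟨A, _, rfl⟩ := ht
      exact hg A.1 A.2 n
    have hTne : T.Nonempty := by
      rw [hT]
      exact Finset.Nonempty.image (Finset.attach_nonempty_iff.mpr hne) _
    have hTcard : T.card ≤ n + 1 := by
      calc T.card ≤ S.attach.card := by rw [hT]; exact Finset.card_image_le
        _ = S.card := Finset.card_attach
        _ ≤ n + 1 := hcard
    obtain ⟨x, hx⟩ := hlinked n T hTsub hTne hTcard
    refine ⟨⟨n, x⟩, ?_⟩
    intro A hAS
    have hAS' : A ∈ S := hAS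
    rw [hA A hAS']
    have hmemT : g A hAS' n ∈ (T : Set (Set (Z n))) := by
      simp only [hT, Finset.coe_image]
      exact ⟨⟨A, hAS'⟩, by simp, rfl⟩
    exact mem_iUnion.mpr ⟨n, ⟨x, hx _ hmemT, rfl⟩⟩
  -- Part 4: far points
  refine ⟨closedPart, fipPart, farPart, ?_⟩
  intro p hp
  have main : ∀ D : Set (Σ n, Z n), IsClosed D → IsDiscreteSubset D →
      p ∉ closure (stoneCechUnit '' D) := by
    intro D hDc hDd
    obtain ⟨A, hAG, hDA⟩ := farPart D hDc hDd
    have hAc := closedPart A hAG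
    have hdisj : Disjoint A D := by
      rw [disjoint_iff_inter_eq_empty, inter_comm]; exact hDA
    exact sep_closure hAc hDc hdisj (hp A hAG)
  refine ⟨?_, main⟩
  rintro ⟨x, rfl⟩
  have hdisc : IsDiscreteSubset ({x} : Set (Σ n, Z n)) := by
    intro y hy
    rw [mem_singleton_iff] at hy
    subst hy
    exact ⟨univ, isOpen_univ, mem_univ _, by simp⟩
  have h := main {x} isClosed_singleton hdisc
  exact h (subset_closure ⟨x, rfl, rfl⟩)
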